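/- For every matrix X ∈ ℝ^{n₁×n₂}, the nuclear norm admits the semidefinite representation ‖X‖_* = min over W₁ ∈ ℝ^{n₁×n₁} and W₂ ∈ ℝ^{n₂×n₂} of (1/2)(Tr(W₁) + Tr(W₂)) subject to the block matrix [[W₁, X],[Xᵀ, W₂]] being positive semidefinite; moreover the minimum is attained (e.g. by W₁ = UΣUᵀ and W₂ = VΣVᵀ where X = UΣVᵀ is a singular value decomposition of X). -/

import Mathlib

open Matrix

noncomputable def nuclearNorm {n₁ n₂ : ℕ} (A : Matrix (Fin n₁) (Fin n₂) ℝ) : ℝ :=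
  ∑ i, Real.sqrt ((show (Aᵀ * A).IsHermitian by
    simpa using Matrix.isHermitian_conjTranspose_mul_self A).eigenvalues i)

private lemma psd_trace_nonneg {n : Type*} [Fintype n] [DecidableEq n]
    {A : Matrix n n ℝ} (hA : A.PosSemidef) : 0 ≤ A.trace := by
  rw [Matrix.trace]
  refine Finset.sum_nonneg fun i _ => ?_
  have h := hA.diag_nonneg (i := i)
  simpa [dotProduct, Matrix.mulVec_single, Pi.single_apply, Finset.sum_ite_eq] using h

open scoped MatrixOrder in
private lemma psd_trace_mul_nonneg {n : Type*} [Fintype n] [DecidableEq n]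
    {A B : Matrix n n ℝ} (hA : A.PosSemidef) (hB : B.PosSemidef) :
    0 ≤ (A * B).trace := by
  obtain ⟨C, hC, -, hAC⟩ :=
    CFC.exists_sqrt_of_isSelfAdjoint_of_quasispectrumRestricts (a := A) hA.isHermitian
      (QuasispectrumRestricts.nnreal_of_nonneg hA.nonneg)
  obtain rfl : A = Cᴴ * C := by
    rw [← star_eq_conjTranspose, hC.star_eq]; simpa using hAC.symm
  rw [Matrix.trace_mul_comm, ← Matrix.mul_assoc, Matrix.trace_mul_cycle]
  exact psd_trace_nonneg (hB.mul_mul_conjTranspose_same C)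

theorem nuclearNorm_sdp_representation (n₁ n₂ : ℕ) (X : Matrix (Fin n₁) (Fin n₂) ℝ) :
    IsLeast
      { t : ℝ | ∃ (W₁ : Matrix (Fin n₁) (Fin n₁) ℝ) (W₂ : Matrix (Fin n₂) (Fin n₂) ℝ),
          (Matrix.fromBlocks W₁ X Xᵀ W₂).PosSemidef ∧ t = (1 / 2) * (W₁.trace + W₂.trace) }
      (nuclearNorm X) := by
  classical
  set hX := (show (Xᵀ * X).IsHermitian by
    simpa using Matrix.isHermitian_conjTranspose_mul_self X) with hXdef
  set lam : Fin n₂ → ℝ := hX.eigenvalues with hlamdef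
  have hlam : ∀ i, 0 ≤ lam i := fun i =>
    Matrix.eigenvalues_conjTranspose_mul_self_nonneg X i
  set σ : Fin n₂ → ℝ := fun i => Real.sqrt (lam i) with hσdef
  have hσ0 : ∀ i, 0 ≤ σ i := fun i => Real.sqrt_nonneg _
  have hσsq : ∀ i, σ i * σ i = lam i := fun i => Real.mul_self_sqrt (hlam i)
  have hnn : nuclearNorm X = ∑ i, σ i := rfl
  set V : Matrix (Fin n₂) (Fin n₂) ℝ := (hX.eigenvectorUnitary : Matrix (Fin n₂) (Fin n₂) ℝ) with hVdef
  have hVV : Vᴴ * V = 1 := by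
    have := Matrix.mem_unitaryGroup_iff'.mp hX.eigenvectorUnitary.2
    simpa [star_eq_conjTranspose] using this
  have hVV' : V * Vᴴ = 1 := by
    have := Matrix.mem_unitaryGroup_iff.mp hX.eigenvectorUnitary.2
    simpa [star_eq_conjTranspose] using this
  have hdiag : Vᴴ * (Xᴴ * X) * V = Matrix.diagonal lam := by
    have := Matrix.IsHermitian.conjStarAlgAut_star_eigenvectorUnitary hX
    simpa [star_eq_conjTranspose, RCLike.ofReal_real_eq_id] using this
  set Y : Matrix (Fin n₁) (Fin n₂) ℝ := X * V with hYdef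
  have hY : Yᴴ * Y = Matrix.diagonal lam := by
    rw [hYdef, Matrix.conjTranspose_mul, show Vᴴ * Xᴴ * (X * V) = Vᴴ * (Xᴴ * X) * V by
      simp only [Matrix.mul_assoc]]
    exact hdiag
  have hYentry : ∀ i j, (∑ a, Y a i * Y a j) = if i = j then lam i else 0 := by
    intro i j
    have h := congrFun (congrFun hY i) j
    simpa [Matrix.mul_apply, Matrix.conjTranspose_apply, Matrix.diagonal_apply] using h
  have hYzero : ∀ i, lam i = 0 → ∀ a, Y a i = 0 := by
    intro i hi a
    have h := hYentry i i
    rw [if_pos rfl, hi] at h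
    have := (Finset.sum_eq_zero_iff_of_nonneg (fun b _ => mul_self_nonneg (Y b i))).mp h
      a (Finset.mem_univ a)
    exact mul_self_eq_zero.mp this
  set τ : Fin n₂ → ℝ := fun i => if lam i = 0 then 0 else (σ i)⁻¹ with hτdef
  set U : Matrix (Fin n₁) (Fin n₂) ℝ := Y * Matrix.diagonal τ with hUdef
  have hUcol : ∀ a i, U a i = Y a i * τ i := by
    intro a i; rw [hUdef, Matrix.mul_diagonal]
  have hUzero : ∀ i, lam i = 0 → ∀ a, U a i = 0 := by
    intro i hi a; rw [hUcol, hτdef]; simp [hi]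
  set χ : Fin n₂ → ℝ := fun i => if lam i = 0 then 0 else 1 with hχdef
  have hσzero : ∀ i, lam i = 0 → σ i = 0 := by
    intro i hi; rw [hσdef]; simp [hi]
  have hσne : ∀ i, lam i ≠ 0 → σ i ≠ 0 := by
    intro i hi h
    exact hi (by rw [← hσsq i, h, mul_zero])
  have hUUentry : ∀ i j, (∑ a, U a i * U a j) = if i = j then χ i else 0 := by
    intro i j
    have h : (∑ a, U a i * U a j) = (τ i * τ j) * ∑ a, Y a i * Y a j := by
      rw [Finset.mul_sum]
      exact Finset.sum_congr rfl fun a _ => by rw [hUcol, hUcol]; ring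
    rw [h, hYentry i j]
    by_cases hij : i = j
    · subst hij
      simp only [if_pos rfl, hχdef, hτdef]
      by_cases hi : lam i = 0
      · simp [hi]
      · have hs := hσne i hi
        rw [if_neg hi, if_neg hi, ← hσsq i]
        field_simp
        simp
    · simp [hij]
  have hUU : Uᴴ * U = Matrix.diagonal χ := by
    ext i j
    rw [Matrix.mul_apply, Matrix.diagonal_apply]
    simpa [Matrix.conjTranspose_apply] using hUUentry i j
  have hYU : Y = U * Matrix.diagonal σ := by
    ext a i
    rw [Matrix.mul_diagonal, hUcol]
    by_cases hi : lam i = 0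
    · simp [hτdef, hi, hYzero i hi a]
    · have hs := hσne i hi
      simp only [hτdef, if_neg hi]
      field_simp
  have hXUV : X = U * Matrix.diagonal σ * Vᴴ := by
    rw [← hYU, hYdef, Matrix.mul_assoc, hVV', Matrix.mul_one]
  have htrsum : ∑ i, χ i * σ i = ∑ i, σ i := by
    refine Finset.sum_congr rfl fun i _ => ?_
    rw [hχdef]
    by_cases hi : lam i = 0
    · simp [hi, hσzero i hi]
    · simp [hi]
  constructor
  · -- membership
    set ρ : Fin n₂ → ℝ := fun i => Real.sqrt (σ i) with hρdef
    have hρsq : Matrix.diagonal ρ * (Matrix.diagonal ρ)ᴴ = Matrix.diagonal σ := by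
      rw [Matrix.diagonal_conjTranspose, Matrix.diagonal_mul_diagonal]
      have h : ∀ i, ρ i * star (ρ i) = σ i := fun i => by
        simpa [hρdef] using Real.mul_self_sqrt (hσ0 i)
      ext i j
      by_cases hij : i = j
      · subst hij; simpa using h i
      · simp [Matrix.diagonal_apply_ne _ hij]
    set A : Matrix (Fin n₁) (Fin n₂) ℝ := U * Matrix.diagonal ρ with hAdef
    set B : Matrix (Fin n₂) (Fin n₂) ℝ := V * Matrix.diagonal ρ with hBdef
    refine ⟨U * Matrix.diagonal σ * Uᴴ, V * Matrix.diagonal σ * Vᴴ, ?_, ?_⟩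
    · have hpsd := Matrix.posSemidef_self_mul_conjTranspose (Matrix.fromRows A B)
      have hNN : Matrix.fromRows A B * (Matrix.fromRows A B)ᴴ =
          Matrix.fromBlocks (U * Matrix.diagonal σ * Uᴴ) X Xᵀ (V * Matrix.diagonal σ * Vᴴ) := by
        rw [Matrix.conjTranspose_fromRows_eq_fromCols_conjTranspose,
          Matrix.fromRows_mul_fromCols]
        have hAA : A * Aᴴ = U * Matrix.diagonal σ * Uᴴ := by
          rw [hAdef, Matrix.conjTranspose_mul, show
            U * Matrix.diagonal ρ * ((Matrix.diagonal ρ)ᴴ * Uᴴ) =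
            U * (Matrix.diagonal ρ * (Matrix.diagonal ρ)ᴴ) * Uᴴ by simp only [Matrix.mul_assoc],
            hρsq]
        have hAB : A * Bᴴ = X := by
          rw [hAdef, hBdef, Matrix.conjTranspose_mul, show
            U * Matrix.diagonal ρ * ((Matrix.diagonal ρ)ᴴ * Vᴴ) =
            U * (Matrix.diagonal ρ * (Matrix.diagonal ρ)ᴴ) * Vᴴ by simp only [Matrix.mul_assoc],
            hρsq, ← hXUV]
        have hBA : B * Aᴴ = Xᵀ := by
          have : (A * Bᴴ)ᴴ = B * Aᴴ := by
            rw [Matrix.conjTranspose_mul, Matrix.conjTranspose_conjTranspose]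
          rw [← this, hAB]
          rfl
        have hBB : B * Bᴴ = V * Matrix.diagonal σ * Vᴴ := by
          rw [hBdef, Matrix.conjTranspose_mul, show
            V * Matrix.diagonal ρ * ((Matrix.diagonal ρ)ᴴ * Vᴴ) =
            V * (Matrix.diagonal ρ * (Matrix.diagonal ρ)ᴴ) * Vᴴ by simp only [Matrix.mul_assoc],
            hρsq]
        rw [hAA, hAB, hBA, hBB]
      rwa [hNN] at hpsd
    · have h1 : (U * Matrix.diagonal σ * Uᴴ).trace = ∑ i, σ i := by
        rw [Matrix.trace_mul_comm, ← Matrix.mul_assoc, hUU, Matrix.diagonal_mul_diagonal,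
          Matrix.trace_diagonal]
        exact htrsum
      have h2 : (V * Matrix.diagonal σ * Vᴴ).trace = ∑ i, σ i := by
        rw [Matrix.trace_mul_comm, ← Matrix.mul_assoc, hVV, Matrix.one_mul,
          Matrix.trace_diagonal]
      rw [h1, h2, hnn]; ring
  · -- lower bound
    rintro t ⟨W₁, W₂, hM, rfl⟩
    set M := Matrix.fromBlocks W₁ X Xᵀ W₂ with hMdef
    have hW₁ : W₁.PosSemidef := by
      have h := hM.submatrix Sum.inl
      have he : M.submatrix Sum.inl Sum.inl = W₁ := by ext i j; simp [hMdef]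
      rwa [he] at h
    set Z : Matrix (Fin n₁ ⊕ Fin n₂) (Fin n₂) ℝ := Matrix.fromRows U (-V) with hZdef
    have hZpsd := hM.conjTranspose_mul_mul_same Z
    have htr0 : 0 ≤ (Zᴴ * M * Z).trace := psd_trace_nonneg hZpsd
    have hexp : Zᴴ * M * Z =
        Uᴴ * (W₁ * U + X * (-V)) + (-V)ᴴ * (Xᵀ * U + W₂ * (-V)) := by
      rw [Matrix.mul_assoc, hZdef, hMdef, Matrix.fromBlocks_mul_fromRows,
        Matrix.conjTranspose_fromRows_eq_fromCols_conjTranspose,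
        Matrix.fromCols_mul_fromRows]
    have hT1 : (Uᴴ * (X * V)).trace = ∑ i, σ i := by
      rw [← hYdef, hYU, ← Matrix.mul_assoc, hUU, Matrix.diagonal_mul_diagonal,
        Matrix.trace_diagonal]
      exact htrsum
    have hT2 : (Vᴴ * (Xᵀ * U)).trace = ∑ i, σ i := by
      have h : (Uᴴ * (X * V))ᵀ = Vᴴ * (Xᵀ * U) := by
        show (Uᴴ * (X * V))ᴴ = Vᴴ * (Xᵀ * U)
        rw [Matrix.conjTranspose_mul, Matrix.conjTranspose_mul,
          Matrix.conjTranspose_conjTranspose]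
        show Vᴴ * Xᴴ * U = Vᴴ * (Xᵀ * U)
        rw [Matrix.mul_assoc]
        rfl
      rw [← h, Matrix.trace_transpose, hT1]
    have hT3 : (Vᴴ * (W₂ * V)).trace = W₂.trace := by
      rw [← Matrix.mul_assoc, Matrix.trace_mul_comm, ← Matrix.mul_assoc, hVV',
        Matrix.one_mul]
    have hT4 : (Uᴴ * (W₁ * U)).trace ≤ W₁.trace := by
      have hUχ : U * Matrix.diagonal χ = U := by
        ext a i
        rw [Matrix.mul_diagonal]
        by_cases hi : lam i = 0
        · simp [hχdef, hi, hUzero i hi a]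
        · simp [hχdef, hi]
      have hPP : (U * Uᴴ) * (U * Uᴴ) = U * Uᴴ := by
        calc (U * Uᴴ) * (U * Uᴴ) = U * (Uᴴ * U) * Uᴴ := by
              simp only [Matrix.mul_assoc]
          _ = U * Matrix.diagonal χ * Uᴴ := by rw [hUU]
          _ = U * Uᴴ := by rw [hUχ]
      have hPsym : (U * Uᴴ)ᴴ = U * Uᴴ := by
        rw [Matrix.conjTranspose_mul, Matrix.conjTranspose_conjTranspose]
      have h1P : (1 - U * Uᴴ).PosSemidef := by
        have h := Matrix.posSemidef_conjTranspose_mul_self (1 - U * Uᴴ)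
        have he : (1 - U * Uᴴ)ᴴ * (1 - U * Uᴴ) = 1 - U * Uᴴ := by
          rw [Matrix.conjTranspose_sub, Matrix.conjTranspose_one, hPsym, sub_mul, mul_sub,
            mul_sub, hPP]
          simp only [Matrix.one_mul, Matrix.mul_one]
          abel
        rwa [he] at h
      have hmul : 0 ≤ (W₁ * (1 - U * Uᴴ)).trace := psd_trace_mul_nonneg hW₁ h1P
      rw [Matrix.mul_sub, Matrix.mul_one] at hmul
      rw [Matrix.trace_sub] at hmul
      have heq : (Uᴴ * (W₁ * U)).trace = (W₁ * (U * Uᴴ)).trace := by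
        rw [Matrix.trace_mul_comm Uᴴ (W₁ * U), Matrix.mul_assoc W₁ U Uᴴ]
      linarith
    have hZexp : (Zᴴ * M * Z).trace =
        (Uᴴ * (W₁ * U)).trace - (∑ i, σ i) - (∑ i, σ i) + (Vᴴ * (W₂ * V)).trace := by
      rw [hexp]
      rw [Matrix.trace_add, Matrix.mul_add, Matrix.mul_add, Matrix.trace_add,
        Matrix.trace_add]
      have e1 : (Uᴴ * (X * -V)).trace = -(∑ i, σ i) := by
        rw [Matrix.mul_neg, Matrix.mul_neg, Matrix.trace_neg, hT1]
      have e2 : ((-V)ᴴ * (Xᵀ * U)).trace = -(∑ i, σ i) := by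
        rw [Matrix.conjTranspose_neg, Matrix.neg_mul, Matrix.trace_neg, hT2]
      have e3 : ((-V)ᴴ * (W₂ * -V)).trace = (Vᴴ * (W₂ * V)).trace := by
        rw [Matrix.conjTranspose_neg, Matrix.neg_mul, Matrix.mul_neg, Matrix.mul_neg,
          neg_neg]
      rw [e1, e2, e3]
      ring
    rw [hZexp, hT3] at htr0
    rw [hnn]
    have := hT4
    linarith
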